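/- With the notation of the allelic decomposition (|C_j| = T^c_j − T^c_{j−1} the size of the j-th allelic cluster, M_j the number of its mutant-children), for every k ≥ 1, integers n_1,...,n_k ≥ 1 and ℓ_1,...,ℓ_k ≥ 0 satisfying ℓ_1+...+ℓ_j > j−1 for all 1 ≤ j < k, one has P(|C_1| = n_1, M_1 = ℓ_1, ..., |C_k| = n_k, M_k = ℓ_k) = Π_{i=1}^k (1/n_i) π^{*n_i}_{n_i − 1, ℓ_i}. -/

import Mathlib

set_option autoImplicit false

open MeasureTheory ProbabilityTheory Filter Finset

namespace AllelicAux

def walkZ (g : ℕ → ℕ) (m : ℕ) : ℤ := (∑ i ∈ Finset.range m, (g i : ℤ)) - m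

def IsFP (n : ℕ) (g : ℕ → ℕ) : Prop := (∀ m < n, walkZ g m ≠ -1) ∧ walkZ g n = -1

lemma walkZ_zero (g : ℕ → ℕ) : walkZ g 0 = 0 := by simp [walkZ]

lemma walkZ_succ (g : ℕ → ℕ) (m : ℕ) :
    walkZ g (m + 1) = walkZ g m + (g m : ℤ) - 1 := by
  simp [walkZ, Finset.sum_range_succ]; ring

lemma walkZ_congr {g g' : ℕ → ℕ} {n : ℕ} (h : ∀ i < n, g i = g' i) :
    ∀ m ≤ n, walkZ g m = walkZ g' m := by
  intro m hm
  unfold walkZ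
  congr 1
  exact Finset.sum_congr rfl fun i hi => by
    rw [h i (lt_of_lt_of_le (Finset.mem_range.mp hi) hm)]

lemma reach {g : ℕ → ℕ} : ∀ m, walkZ g m ≤ -1 → ∃ s ≤ m, walkZ g s = -1 := by
  intro m
  induction m with
  | zero => intro h; rw [walkZ_zero] at h; omega
  | succ m ih =>
    intro h
    by_cases hm : walkZ g m ≤ -1
    · obtain ⟨s, hs, hs'⟩ := ih hm
      exact ⟨s, Nat.le_succ_of_le hs, hs'⟩
    · push_neg at hm
      refine ⟨m + 1, le_refl _, ?_⟩
      rw [walkZ_succ] at h ⊢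
      have : (0 : ℤ) ≤ (g m : ℤ) := Int.natCast_nonneg _
      omega

lemma IsFP.nonneg {n : ℕ} {g : ℕ → ℕ} (h : IsFP n g) : ∀ m < n, 0 ≤ walkZ g m := by
  intro m hm
  by_contra hc
  push_neg at hc
  obtain ⟨s, hs, hs'⟩ := reach (g := g) m (by omega)
  exact h.1 s (lt_of_le_of_lt hs hm) hs'

lemma IsFP.congr {n : ℕ} {g g' : ℕ → ℕ} (h : ∀ i < n, g i = g' i) (hg : IsFP n g) :
    IsFP n g' := by
  constructor
  · intro m hm
    rw [← walkZ_congr h m (le_of_lt hm)]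
    exact hg.1 m hm
  · rw [← walkZ_congr h n le_rfl]; exact hg.2

lemma walkZ_shift (h : ℕ → ℕ) (a m : ℕ) :
    walkZ (fun j => h (a + j)) m = walkZ h (a + m) - walkZ h a := by
  unfold walkZ
  have : ∑ i ∈ Finset.range (a + m), (h i : ℤ)
      = ∑ i ∈ Finset.range a, (h i : ℤ) + ∑ j ∈ Finset.range m, (h (a + j) : ℤ) := by
    rw [Finset.sum_range_add]
  push_cast
  omega

def rotc (n r : ℕ) (g : ℕ → ℕ) : ℕ → ℕ := fun i => g ((i + r) % n)

lemma walkZ_rotc_low {n r : ℕ} (g : ℕ → ℕ) (hr : r ≤ n) {m : ℕ} (hm : m ≤ n - r) :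
    walkZ (rotc n r g) m = walkZ g (r + m) - walkZ g r := by
  have h1 : walkZ (rotc n r g) m = walkZ (fun j => g (r + j)) m := by
    apply walkZ_congr (n := m) _ m le_rfl
    intro i hi
    have hin : i + r < n := by omega
    show g ((i + r) % n) = g (r + i)
    rw [Nat.mod_eq_of_lt hin, Nat.add_comm]
  rw [h1, walkZ_shift]

lemma walkZ_rotc_high {n r : ℕ} (g : ℕ → ℕ) (hn : 0 < n) (hr : r ≤ n) {m : ℕ}
    (h1 : n - r ≤ m) (h2 : m ≤ n) :
    walkZ (rotc n r g) m = walkZ g n - walkZ g r + walkZ g (m - (n - r)) := by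
  -- split range m at n - r
  obtain ⟨t, rfl⟩ : ∃ t, m = (n - r) + t := ⟨m - (n - r), by omega⟩
  have htdef : (n - r) + t - (n - r) = t := by omega
  rw [htdef]
  unfold walkZ
  rw [Finset.sum_range_add]
  have e1 : ∑ i ∈ Finset.range (n - r), ((rotc n r g i : ℤ))
      = ∑ i ∈ Finset.range (n - r), (g (r + i) : ℤ) := by
    apply Finset.sum_congr rfl
    intro i hi
    rw [Finset.mem_range] at hi
    have hin : i + r < n := by omega
    show ((g ((i + r) % n) : ℤ)) = (g (r + i) : ℤ)
    rw [Nat.mod_eq_of_lt hin, Nat.add_comm]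
  have e2 : ∑ i ∈ Finset.range t, ((rotc n r g ((n - r) + i) : ℤ))
      = ∑ i ∈ Finset.range t, (g i : ℤ) := by
    apply Finset.sum_congr rfl
    intro i hi
    rw [Finset.mem_range] at hi
    have hlt : (n - r) + i + r = n + i := by omega
    have : (n + i) % n = i := by
      rw [Nat.add_mod_left, Nat.mod_eq_of_lt (by omega)]
    simp [rotc, hlt, this]
  rw [e1, e2]
  have s1 : ∑ i ∈ Finset.range (n - r), (g (r + i) : ℤ)
      = ∑ i ∈ Finset.range n, (g i : ℤ) - ∑ i ∈ Finset.range r, (g i : ℤ) := by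
    have : ∑ i ∈ Finset.range n, (g i : ℤ)
        = ∑ i ∈ Finset.range r, (g i : ℤ) + ∑ i ∈ Finset.range (n - r), (g (r + i) : ℤ) := by
      have hx : r + (n - r) = n := by omega
      rw [← Finset.sum_range_add, hx]
    omega
  push_cast
  omega

lemma exists_rot_isFP {n : ℕ} {g : ℕ → ℕ} (hn : 0 < n) (h : walkZ g n = -1) :
    ∃ r < n, IsFP n (rotc n r g) := by
  classical
  -- b : minimum of walkZ g over [0, n]
  obtain ⟨b, hbmem, hbmin⟩ : ∃ b ∈ (Finset.range (n+1)).image (walkZ g),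
      ∀ x ∈ (Finset.range (n+1)).image (walkZ g), b ≤ x := by
    obtain ⟨b, hb1, hb2⟩ := Finset.exists_min_image _ (walkZ g) ⟨0, Finset.mem_range.mpr (Nat.succ_pos n)⟩
    exact ⟨walkZ g b, Finset.mem_image_of_mem _ hb1, fun x hx => by
      obtain ⟨y, hy, rfl⟩ := Finset.mem_image.mp hx
      exact hb2 y hy⟩
  have hmin : ∀ m ≤ n, b ≤ walkZ g m := fun m hm =>
    hbmin _ (Finset.mem_image_of_mem _ (Finset.mem_range.mpr (by omega)))
  have hb_le : b ≤ -1 := le_trans (hmin n le_rfl) (le_of_eq h)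
  let S := {m : ℕ | m ≤ n ∧ walkZ g m = b}
  have hSne : S.Nonempty := by
    obtain ⟨y, hy, hyb⟩ := Finset.mem_image.mp hbmem
    exact ⟨y, Nat.lt_succ_iff.mp (Finset.mem_range.mp hy), hyb⟩
  obtain ⟨r, hrS, hrlow⟩ : ∃ r, r ∈ S ∧ ∀ m < r, m ∉ S :=
    ⟨sInf S, Nat.sInf_mem hSne, fun m hm => Nat.notMem_of_lt_sInf hm⟩
  have hrn : r ≤ n := hrS.1
  have hrb : walkZ g r = b := hrS.2
  have hfirst : ∀ m < r, b < walkZ g m := by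
    intro m hm
    have hmn : m ≤ n := le_trans (le_of_lt hm) hrn
    have hne : walkZ g m ≠ b := fun hc => hrlow m hm ⟨hmn, hc⟩
    exact lt_of_le_of_ne (hmin m hmn) (Ne.symm hne)
  by_cases hrn' : r = n
  · -- min attained first at n; g itself is FP, rotation 0
    refine ⟨0, hn, ?_⟩
    have hbv : b = -1 := by rw [← hrb, hrn', h]
    have hFP : IsFP n g := by
      constructor
      · intro m hm
        have := hfirst m (by omega)
        omega
      · exact h
    apply hFP.congr (n := n)
    intro i hi
    simp [rotc, Nat.mod_eq_of_lt hi]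
  · have hrn2 : r < n := lt_of_le_of_ne hrn hrn'
    refine ⟨r, hrn2, ?_, ?_⟩
    · intro m hm
      by_cases hcase : m ≤ n - r
      · rw [walkZ_rotc_low g hrn hcase, hrb]
        have : b ≤ walkZ g (r + m) := hmin _ (by omega)
        omega
      · push_neg at hcase
        rw [walkZ_rotc_high g hn hrn (by omega) (by omega), h, hrb]
        have ht : m - (n - r) < r := by omega
        have := hfirst _ ht
        omega
    · rw [walkZ_rotc_high g hn hrn (Nat.sub_le n r) le_rfl, h, hrb]
      have : n - (n - r) = r := by omega
      rw [this, hrb]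
      ring

lemma rot_isFP_unique {n r : ℕ} {g : ℕ → ℕ} (hg : IsFP n g) (hr : r < n)
    (h : IsFP n (rotc n r g)) : r = 0 := by
  by_contra hr0
  have hr1 : 1 ≤ r := Nat.one_le_iff_ne_zero.mpr hr0
  have hw : walkZ (rotc n r g) (n - r) = walkZ g n - walkZ g r := by
    have h2 : r + (n - r) = n := by omega
    have := walkZ_rotc_low (n := n) (r := r) g (le_of_lt hr) (le_refl (n - r))
    rw [h2] at this
    exact this
  have hgr : 0 ≤ walkZ g r := hg.nonneg r hr
  have hle : walkZ (rotc n r g) (n - r) ≤ -1 := by rw [hw, hg.2]; omega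
  obtain ⟨s, hs, hs'⟩ := reach _ hle
  exact h.1 s (by omega) hs'

end AllelicAux

namespace AllelicAux

noncomputable section
open scoped ENNReal

abbrev XX : Type := ℕ × ℕ

def extF {n : ℕ} (v : Fin n → XX) : ℕ → XX := fun j => if h : j < n then v ⟨j, h⟩ else (0, 0)

lemma extF_lt {n : ℕ} (v : Fin n → XX) {j : ℕ} (h : j < n) : extF v j = v ⟨j, h⟩ :=
  dif_pos h

lemma extF_not_lt {n : ℕ} (v : Fin n → XX) {j : ℕ} (h : ¬ j < n) : extF v j = (0, 0) :=
  dif_neg h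

def FPpred (n ℓ : ℕ) (v : Fin n → XX) : Prop :=
  IsFP n (fun j => (extF v j).1) ∧ (∑ i : Fin n, (v i).2) = ℓ

def Dpred (n ℓ : ℕ) (v : Fin n → XX) : Prop :=
  (∑ i : Fin n, (v i).1) = n - 1 ∧ (∑ i : Fin n, (v i).2) = ℓ

def wgt {n : ℕ} (p : XX → ℝ≥0∞) (v : Fin n → XX) : ℝ≥0∞ := ∏ i, p (v i)

def rotF {n : ℕ} [NeZero n] (r : Fin n) (v : Fin n → XX) : Fin n → XX := fun i => v (i + r)

lemma rotF_rotF {n : ℕ} [NeZero n] (r s : Fin n) (v : Fin n → XX) :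
    rotF r (rotF s v) = rotF (r + s) v := by
  funext i
  simp only [rotF, add_assoc]

lemma rotF_zero {n : ℕ} [NeZero n] (v : Fin n → XX) : rotF 0 v = v := by
  funext i
  simp [rotF]

lemma extF_rotF {n : ℕ} [NeZero n] (r : Fin n) (v : Fin n → XX) {j : ℕ} (hj : j < n) :
    extF (rotF r v) j = extF v ((j + r.val) % n) := by
  have hmod : (j + r.val) % n < n := Nat.mod_lt _ (Nat.pos_of_ne_zero (NeZero.ne n))
  rw [extF_lt _ hj, extF_lt _ hmod]
  show v (⟨j, hj⟩ + r) = _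
  congr 1

lemma rotF_sum_fst {n : ℕ} [NeZero n] (r : Fin n) (v : Fin n → XX) (f : XX → ℕ) :
    (∑ i : Fin n, f (rotF r v i)) = ∑ i : Fin n, f (v i) :=
  Fintype.sum_equiv (Equiv.addRight r) _ _ (fun i => rfl)

lemma rotF_wgt {n : ℕ} [NeZero n] (p : XX → ℝ≥0∞) (r : Fin n) (v : Fin n → XX) :
    wgt p (rotF r v) = wgt p v :=
  Fintype.prod_equiv (Equiv.addRight r) _ _ (fun i => rfl)

lemma rotF_isFP_iff_rotc {n : ℕ} [NeZero n] (r : Fin n) (v : Fin n → XX) :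
    IsFP n (fun j => (extF (rotF r v) j).1) ↔
      IsFP n (rotc n r.val (fun j => (extF v j).1)) := by
  have hcongr : ∀ j < n, (extF (rotF r v) j).1 = rotc n r.val (fun j => (extF v j).1) j := by
    intro j hj
    rw [extF_rotF r v hj]
    rfl
  exact ⟨fun h => h.congr hcongr, fun h => IsFP.congr (fun i hi => (hcongr i hi).symm) h⟩

lemma FPpred_sum_fst {n ℓ : ℕ} {v : Fin n → XX} (hn : 0 < n) (h : FPpred n ℓ v) :
    (∑ i : Fin n, (v i).1) = n - 1 := by
  have h2 := h.1.2
  unfold walkZ at h2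
  have hs : ∑ j ∈ Finset.range n, ((extF v j).1 : ℤ) = ∑ i : Fin n, ((v i).1 : ℤ) := by
    rw [← Fin.sum_univ_eq_sum_range (fun j => ((extF v j).1 : ℤ)) n]
    exact Finset.sum_congr rfl fun i _ => by rw [extF_lt v i.isLt]
  rw [hs] at h2
  have : ((∑ i : Fin n, (v i).1 : ℕ) : ℤ) = (n : ℤ) - 1 := by push_cast; omega
  omega

lemma Dpred_walk {n ℓ : ℕ} {v : Fin n → XX} (hn : 0 < n) (h : Dpred n ℓ v) :
    walkZ (fun j => (extF v j).1) n = -1 := by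
  unfold walkZ
  have hs : ∑ j ∈ Finset.range n, ((extF v j).1 : ℤ) = ∑ i : Fin n, ((v i).1 : ℤ) := by
    rw [← Fin.sum_univ_eq_sum_range (fun j => ((extF v j).1 : ℤ)) n]
    exact Finset.sum_congr rfl fun i _ => by rw [extF_lt v i.isLt]
  rw [hs]
  have h1 := h.1
  have : ((∑ i : Fin n, (v i).1 : ℕ) : ℤ) = ((n - 1 : ℕ) : ℤ) := by rw [h1]
  push_cast at this
  omega

lemma rotF_FP_unique {n ℓ : ℕ} [NeZero n] {v : Fin n → XX} (hv : FPpred n ℓ v)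
    {s : Fin n} (hs : FPpred n ℓ (rotF s v)) : s = 0 := by
  have h1 : IsFP n (rotc n s.val (fun j => (extF v j).1)) :=
    (rotF_isFP_iff_rotc s v).mp hs.1
  have := rot_isFP_unique hv.1 s.isLt h1
  exact Fin.ext (by simp [this])

lemma rotF_FPpred {n ℓ : ℕ} [NeZero n] {v : Fin n → XX} (r : Fin n) (hv : FPpred n ℓ v) :
    Dpred n ℓ (rotF r v) := by
  constructor
  · rw [rotF_sum_fst r v Prod.fst]
    exact FPpred_sum_fst (Nat.pos_of_ne_zero (NeZero.ne n)) hv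
  · rw [rotF_sum_fst r v Prod.snd]
    exact hv.2

lemma cycle_tsum (p : XX → ℝ≥0∞) {n : ℕ} (hn : 0 < n) (ℓ : ℕ) :
    ∑' v : {v : Fin n → XX // Dpred n ℓ v}, wgt p v.1
      = n * ∑' v : {v : Fin n → XX // FPpred n ℓ v}, wgt p v.1 := by
  haveI : NeZero n := ⟨hn.ne'⟩
  have hbij : Function.Bijective
      (fun x : Fin n × {v : Fin n → XX // FPpred n ℓ v} =>
        (⟨rotF x.1 x.2.1, rotF_FPpred x.1 x.2.2⟩ : {v : Fin n → XX // Dpred n ℓ v})) := by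
    constructor
    · rintro ⟨r, v, hv⟩ ⟨r', v', hv'⟩ heq
      simp only [Subtype.mk.injEq, Prod.mk.injEq] at heq ⊢
      have h1 : rotF (-r') (rotF r v) = rotF (-r') (rotF r' v') := by rw [heq]
      rw [rotF_rotF, rotF_rotF, neg_add_cancel, rotF_zero] at h1
      -- h1 : rotF (-r' + r) v = v'
      have hsub : FPpred n ℓ (rotF (-r' + r) v) := h1 ▸ hv'
      have hz : (-r' + r) = 0 := rotF_FP_unique hv hsub
      have hrr : r = r' := by
        have := congrArg (fun x => r' + x) hz
        simpa [← add_assoc] using this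
      refine ⟨hrr, ?_⟩
      rw [← h1, hz, rotF_zero]
    · rintro ⟨w, hw⟩
      have hwalk : walkZ (fun j => (extF w j).1) n = -1 := Dpred_walk hn hw
      obtain ⟨r, hrn, hrFP⟩ := exists_rot_isFP hn hwalk
      set rf : Fin n := ⟨r, hrn⟩ with hrf
      have hFProt : FPpred n ℓ (rotF rf w) := by
        constructor
        · rw [rotF_isFP_iff_rotc]
          exact hrFP
        · rw [rotF_sum_fst rf w Prod.snd]
          exact hw.2
      refine ⟨⟨-rf, ⟨rotF rf w, hFProt⟩⟩, ?_⟩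
      simp only [Subtype.mk.injEq]
      rw [rotF_rotF, neg_add_cancel, rotF_zero]
  let e := Equiv.ofBijective _ hbij
  have := Equiv.tsum_eq e (fun d : {v : Fin n → XX // Dpred n ℓ v} => wgt p d.1)
  rw [← this]
  have hterm : ∀ x : Fin n × {v : Fin n → XX // FPpred n ℓ v},
      wgt p ((e x).1) = wgt p x.2.1 := by
    rintro ⟨r, v, hv⟩
    exact rotF_wgt p r v
  calc ∑' x : Fin n × {v : Fin n → XX // FPpred n ℓ v}, wgt p ((e x).1)
      = ∑' x : Fin n × {v : Fin n → XX // FPpred n ℓ v}, wgt p x.2.1 := by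
        exact tsum_congr hterm
    _ = ∑' (r : Fin n), ∑' v : {v : Fin n → XX // FPpred n ℓ v}, wgt p v.1 :=
        ENNReal.tsum_prod (f := fun (_ : Fin n) (v : {v : Fin n → XX // FPpred n ℓ v}) => wgt p v.1)
    _ = n * ∑' v : {v : Fin n → XX // FPpred n ℓ v}, wgt p v.1 := by
        rw [tsum_fintype]
        simp [Finset.sum_const, nsmul_eq_mul]

end

end AllelicAux

namespace AllelicAux

noncomputable section
open scoped ENNReal Classical

def BlockOK (n ℓ : ℕ) (g : ℕ → XX) : Prop :=
  IsFP n (fun j => (g j).1) ∧ (∑ j ∈ Finset.range n, (g j).2) = ℓ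

lemma BlockOK_congr {n ℓ : ℕ} {g g' : ℕ → XX} (h : ∀ i < n, g i = g' i) :
    BlockOK n ℓ g ↔ BlockOK n ℓ g' := by
  have h1 : ∀ i < n, (g i).1 = (g' i).1 := fun i hi => by rw [h i hi]
  have hsum : ∑ j ∈ Finset.range n, (g j).2 = ∑ j ∈ Finset.range n, (g' j).2 :=
    Finset.sum_congr rfl fun j hj => by rw [h j (Finset.mem_range.mp hj)]
  unfold BlockOK
  rw [hsum]
  constructor
  · rintro ⟨hf, hs⟩; exact ⟨hf.congr h1, hs⟩
  · rintro ⟨hf, hs⟩; exact ⟨hf.congr (fun i hi => (h1 i hi).symm), hs⟩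

lemma FPpred_iff_BlockOK {n ℓ : ℕ} (v : Fin n → XX) :
    FPpred n ℓ v ↔ BlockOK n ℓ (extF v) := by
  unfold FPpred BlockOK
  have : ∑ j ∈ Finset.range n, (extF v j).2 = ∑ i : Fin n, (v i).2 := by
    rw [← Fin.sum_univ_eq_sum_range (fun j => (extF v j).2) n]
    exact Finset.sum_congr rfl fun i _ => by rw [extF_lt v i.isLt]
  rw [this]

def NN (nn : ℕ → ℕ) : ℕ → ℕ
  | 0 => 0
  | k + 1 => NN nn k + nn k

lemma NN_mono (nn : ℕ → ℕ) : Monotone (NN nn) := by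
  apply monotone_nat_of_le_succ
  intro k
  show NN nn k ≤ NN nn k + nn k
  omega

def ABpred (nn ll : ℕ → ℕ) (k : ℕ) (v : Fin (NN nn k) → XX) : Prop :=
  ∀ i < k, BlockOK (nn i) (ll i) (fun j => extF v (NN nn i + j))

lemma tsum_split (p : XX → ℝ≥0∞) (a b : ℕ)
    (A : (Fin a → XX) → Prop) (B : (Fin b → XX) → Prop) :
    (∑' v : Fin (a + b) → XX,
      if A (fun i => v (Fin.castAdd b i)) ∧ B (fun j => v (Fin.natAdd a j))
        then wgt p v else 0)
    = (∑' u : Fin a → XX, if A u then wgt p u else 0)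
      * (∑' w : Fin b → XX, if B w then wgt p w else 0) := by
  let e : ((Fin a → XX) × (Fin b → XX)) ≃ (Fin (a + b) → XX) :=
    (Equiv.sumArrowEquivProdArrow (Fin a) (Fin b) XX).symm.trans
      (Equiv.arrowCongr finSumFinEquiv (Equiv.refl XX))
  rw [← Equiv.tsum_eq e (fun v => if A (fun i => v (Fin.castAdd b i))
      ∧ B (fun j => v (Fin.natAdd a j)) then wgt p v else 0)]
  have he1 : ∀ (u : Fin a → XX) (w : Fin b → XX) (i : Fin a),
      e (u, w) (Fin.castAdd b i) = u i := by
    intro u w i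
    show Sum.elim u w (finSumFinEquiv.symm (Fin.castAdd b i)) = u i
    rw [finSumFinEquiv_symm_apply_castAdd]
    rfl
  have he2 : ∀ (u : Fin a → XX) (w : Fin b → XX) (j : Fin b),
      e (u, w) (Fin.natAdd a j) = w j := by
    intro u w j
    show Sum.elim u w (finSumFinEquiv.symm (Fin.natAdd a j)) = w j
    rw [finSumFinEquiv_symm_apply_natAdd]
    rfl
  have hterm : ∀ x : (Fin a → XX) × (Fin b → XX),
      (if A (fun i => e x (Fin.castAdd b i)) ∧ B (fun j => e x (Fin.natAdd a j))
        then wgt p (e x) else 0)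
      = (if A x.1 then wgt p x.1 else 0) * (if B x.2 then wgt p x.2 else 0) := by
    rintro ⟨u, w⟩
    have hA : (fun i => e (u, w) (Fin.castAdd b i)) = u := funext (he1 u w)
    have hB : (fun j => e (u, w) (Fin.natAdd a j)) = w := funext (he2 u w)
    have hwgt : wgt p (e (u, w)) = wgt p u * wgt p w := by
      unfold wgt
      rw [Fin.prod_univ_add (f := fun i => p (e (u, w) i))]
      congr 1
      · exact Finset.prod_congr rfl fun i _ => by rw [he1 u w i]
      · exact Finset.prod_congr rfl fun j _ => by rw [he2 u w j]
    rw [hA, hB, hwgt]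
    by_cases hu : A u <;> by_cases hw : B w <;> simp [hu, hw]
  rw [tsum_congr hterm]
  rw [ENNReal.tsum_prod (f := fun u w => (if A u then wgt p u else 0) * (if B w then wgt p w else 0))]
  calc ∑' (u : Fin a → XX) (w : Fin b → XX),
        (if A u then wgt p u else 0) * (if B w then wgt p w else 0)
      = ∑' (u : Fin a → XX), (if A u then wgt p u else 0)
          * ∑' (w : Fin b → XX), (if B w then wgt p w else 0) := by
        exact tsum_congr fun u => ENNReal.tsum_mul_left
    _ = _ := ENNReal.tsum_mul_right

lemma fact_tsum (p : XX → ℝ≥0∞) (nn ll : ℕ → ℕ) :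
    ∀ k : ℕ, (∑' v : Fin (NN nn k) → XX, if ABpred nn ll k v then wgt p v else 0)
      = ∏ i ∈ Finset.range k,
          ∑' u : Fin (nn i) → XX, if BlockOK (nn i) (ll i) (extF u) then wgt p u else 0 := by
  intro k
  induction k with
  | zero =>
    rw [Finset.range_zero, Finset.prod_empty]
    haveI : IsEmpty (Fin (NN nn 0)) := ⟨fun i => Nat.not_lt_zero i.val i.isLt⟩
    haveI : Unique (Fin (NN nn 0) → XX) :=
      ⟨⟨fun i => (0, 0)⟩, fun f => funext fun i => absurd i.isLt (Nat.not_lt_zero i.val)⟩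
    have h1 : ∀ v : Fin (NN nn 0) → XX, (if ABpred nn ll 0 v then wgt p v else 0) = 1 := by
      intro v
      have hA : ABpred nn ll 0 v := fun i hi => absurd hi (Nat.not_lt_zero i)
      rw [if_pos hA]
      unfold wgt
      exact Finset.prod_of_isEmpty _
    rw [tsum_congr h1]
    exact tsum_eq_single default (fun b hb => absurd (Subsingleton.elim b default) hb)
  | succ k ih =>
    rw [Finset.prod_range_succ, ← ih]
    show (∑' v : Fin (NN nn k + nn k) → XX, if ABpred nn ll (k+1) v then wgt p v else 0) = _
    rw [← tsum_split p (NN nn k) (nn k) (ABpred nn ll k)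
      (fun u => BlockOK (nn k) (ll k) (extF u))]
    apply tsum_congr
    intro v
    congr 1
    · -- propositional equality of conditions
      apply propext
      have hL : ∀ m < NN nn k, extF (fun i : Fin (NN nn k) => v (Fin.castAdd (nn k) i)) m
          = extF v m := by
        intro m hm
        rw [extF_lt _ hm, extF_lt _ (lt_of_lt_of_le hm (Nat.le_add_right _ _))]
        rfl
      have hR : (fun j => extF v (NN nn k + j))
          = extF (fun j : Fin (nn k) => v (Fin.natAdd (NN nn k) j)) := by
        funext j
        by_cases hj : j < nn k
        · rw [extF_lt _ hj, extF_lt _ (by omega : NN nn k + j < NN nn k + nn k)]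
          rfl
        · rw [extF_not_lt _ (by omega : ¬ NN nn k + j < NN nn k + nn k), extF_not_lt _ hj]
      constructor
      · intro hAB
        constructor
        · intro i hi
          have h2 := hAB i (Nat.lt_succ_of_lt hi)
          refine (BlockOK_congr ?_).mp h2
          intro j hj
          have hlt : NN nn i + j < NN nn k := by
            have h3 : NN nn i + nn i = NN nn (i+1) := rfl
            have h4 : NN nn (i+1) ≤ NN nn k := NN_mono nn hi
            omega
          exact (hL _ hlt).symm
        · rw [← hR]
          exact hAB k (Nat.lt_succ_self k)
      · rintro ⟨hA, hB⟩ i hi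
        rcases Nat.lt_succ_iff_lt_or_eq.mp hi with hik | rfl
        · have h2 := hA i hik
          refine (BlockOK_congr ?_).mp h2
          intro j hj
          have hlt : NN nn i + j < NN nn k := by
            have h3 : NN nn i + nn i = NN nn (i+1) := rfl
            have h4 : NN nn (i+1) ≤ NN nn k := NN_mono nn hik
            omega
          exact hL _ hlt
        · exact (congrArg (BlockOK (nn i) (ll i)) hR).mpr hB

end

end AllelicAux

namespace AllelicAux

noncomputable section
open scoped ENNReal Classical
open MeasureTheory ProbabilityTheory

-- ω-level equivalence between hitting-time description and block description
lemma key_equiv (g : ℕ → XX) (Tcv : ℕ → ℕ)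
    (hTc : ∀ j, Tcv j = sInf {m : ℕ |
      (∑ i ∈ Finset.range m, ((g i).1 : ℤ)) - m = -(j : ℤ)})
    (k : ℕ) (nn ll : ℕ → ℕ) (hnn : ∀ i < k, 1 ≤ nn i) :
    (∀ i < k, Tcv (i + 1) - Tcv i = nn i ∧
        (∑ ℓ ∈ Finset.Ico (Tcv i) (Tcv (i + 1)), (g ℓ).2) = ll i)
    ↔ (∀ i < k, BlockOK (nn i) (ll i) (fun j => g (NN nn i + j))) := by
  set gc : ℕ → ℕ := fun m => (g m).1 with hgc
  have hTc' : ∀ j, Tcv j = sInf {m : ℕ | walkZ gc m = -(j : ℤ)} := by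
    intro j
    rw [hTc j]
    rfl
  have hT0 : Tcv 0 = 0 := by
    rw [hTc' 0]
    apply Nat.sInf_eq_zero.mpr
    left
    show walkZ gc 0 = -(0 : ℤ)
    simp [walkZ_zero]
  have hNNpos : ∀ j, 1 ≤ j → j ≤ k → 1 ≤ NN nn j := by
    intro j h1 h2
    rcases j with _ | j
    · omega
    · have := hnn j (by omega)
      show 1 ≤ NN nn j + nn j
      omega
  have hblockwalk : ∀ i m, walkZ (fun j => gc (NN nn i + j)) m
      = walkZ gc (NN nn i + m) - walkZ gc (NN nn i) := fun i m => walkZ_shift gc _ m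
  constructor
  · intro H
    have hTval : ∀ j, j ≤ k → Tcv j = NN nn j := by
      intro j
      induction j with
      | zero => intro _; rw [hT0]; rfl
      | succ j ih =>
        intro hj
        have hTj : Tcv j = NN nn j := ih (by omega)
        have h1 := (H j (by omega)).1
        have h2 := hnn j (by omega)
        rw [hTj] at h1
        show Tcv (j+1) = NN nn j + nn j
        omega
    have hmem : ∀ j, 1 ≤ j → j ≤ k → (walkZ gc (NN nn j) = -(j : ℤ)
        ∧ ∀ m < NN nn j, walkZ gc m ≠ -(j : ℤ)) := by
      intro j h1 h2
      have hs : sInf {m : ℕ | walkZ gc m = -(j : ℤ)} = NN nn j := by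
        rw [← hTc' j]; exact hTval j h2
      have hne : {m : ℕ | walkZ gc m = -(j : ℤ)}.Nonempty := by
        by_contra hc
        rw [Set.not_nonempty_iff_eq_empty] at hc
        rw [hc, Nat.sInf_empty] at hs
        have := hNNpos j h1 h2
        omega
      constructor
      · have := Nat.sInf_mem hne
        rw [hs] at this
        exact this
      · intro m hm
        have : m ∉ {m : ℕ | walkZ gc m = -(j : ℤ)} :=
          Nat.notMem_of_lt_sInf (by rw [hs]; exact hm)
        exact this
    have hwNN : ∀ j ≤ k, walkZ gc (NN nn j) = -(j : ℤ) := by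
      intro j hj
      rcases Nat.eq_zero_or_pos j with rfl | hj1
      · show walkZ gc 0 = 0
        exact walkZ_zero gc
      · exact (hmem j hj1 hj).1
    intro i hi
    constructor
    · constructor
      · intro m hm
        rw [hblockwalk i m, hwNN i (le_of_lt hi)]
        have hlt : NN nn i + m < NN nn (i+1) := by
          show NN nn i + m < NN nn i + nn i
          omega
        have := (hmem (i+1) (by omega) (by omega)).2 (NN nn i + m) hlt
        intro hcon
        apply this
        push_cast
        push_cast at hcon
        omega
      · rw [hblockwalk i (nn i), hwNN i (le_of_lt hi)]
        have : NN nn i + nn i = NN nn (i+1) := rfl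
        rw [this, hwNN (i+1) hi]
        push_cast
        ring
    · have h2 := (H i hi).2
      rw [hTval i (le_of_lt hi), hTval (i+1) hi] at h2
      rw [← h2]
      have hstep1 : NN nn (i+1) = NN nn i + nn i := rfl
      rw [Finset.sum_Ico_eq_sum_range, hstep1]
      have hd : NN nn i + nn i - NN nn i = nn i := by omega
      rw [hd]
  · intro H
    have hwNN : ∀ j ≤ k, walkZ gc (NN nn j) = -(j : ℤ) := by
      intro j
      induction j with
      | zero => intro _; exact walkZ_zero gc
      | succ j ih =>
        intro hj
        have h1 := ((H j (by omega)).1).2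
        rw [hblockwalk j (nn j), ih (by omega)] at h1
        have : NN nn j + nn j = NN nn (j+1) := rfl
        rw [this] at h1
        push_cast
        omega
    have hlocate : ∀ j, ∀ m < NN nn j, ∃ i < j, NN nn i ≤ m ∧ m < NN nn (i+1) := by
      intro j
      induction j with
      | zero =>
        intro m hm
        rw [show NN nn 0 = 0 from rfl] at hm
        omega
      | succ j ih =>
        intro m hm
        by_cases hmj : m < NN nn j
        · obtain ⟨i, hi, h1, h2⟩ := ih m hmj
          exact ⟨i, by omega, h1, h2⟩
        · exact ⟨j, by omega, by omega, hm⟩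
    have hnohit : ∀ j ≤ k, ∀ m < NN nn j, walkZ gc m ≠ -(j : ℤ) := by
      intro j hj m hm
      obtain ⟨i, hij, h1, h2⟩ := hlocate j m hm
      have hFP := (H i (by omega)).1
      have hnonneg := hFP.nonneg (m - NN nn i) (by
        have : NN nn (i+1) = NN nn i + nn i := rfl
        omega)
      rw [hblockwalk i (m - NN nn i), hwNN i (by omega)] at hnonneg
      have hEq : NN nn i + (m - NN nn i) = m := by omega
      rw [hEq] at hnonneg
      have : (i : ℤ) < (j : ℤ) := by exact_mod_cast hij
      omega
    have hTval : ∀ j ≤ k, Tcv j = NN nn j := by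
      intro j hj
      rw [hTc' j]
      have hmemj : NN nn j ∈ {m : ℕ | walkZ gc m = -(j : ℤ)} := hwNN j hj
      apply le_antisymm (Nat.sInf_le hmemj)
      by_contra hc
      push_neg at hc
      have hmem := Nat.sInf_mem (⟨NN nn j, hmemj⟩ :
        Set.Nonempty {m : ℕ | walkZ gc m = -(j : ℤ)})
      exact hnohit j hj _ hc hmem
    intro i hi
    have hTi := hTval i (le_of_lt hi)
    have hTi1 := hTval (i+1) hi
    have hstep : NN nn (i+1) = NN nn i + nn i := rfl
    constructor
    · rw [hTi, hTi1, hstep]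
      omega
    · rw [hTi, hTi1, Finset.sum_Ico_eq_sum_range, hstep]
      have h2 := (H i hi).2
      rw [← h2]
      have hd : NN nn i + nn i - NN nn i = nn i := by omega
      rw [hd]

end

end AllelicAux

namespace AllelicAux

noncomputable section
open scoped ENNReal Classical
open MeasureTheory ProbabilityTheory

variable {Ω : Type*} [MeasurableSpace Ω] (P : Measure Ω) [IsProbabilityMeasure P]
variable (ξ : ℕ → Ω → XX)

def pdist : XX → ℝ≥0∞ := fun a => P (ξ 0 ⁻¹' {a})

lemma meas_cylinder (hmeas : ∀ i, Measurable (ξ i))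
    (hindep : iIndepFun ξ P)
    (hident : ∀ i, IdentDistrib (ξ i) (ξ 0) P P)
    (N : ℕ) (v : Fin N → XX) :
    P {ω | ∀ i : Fin N, ξ i.val ω = v i} = ∏ i : Fin N, pdist P ξ (v i) := by
  have hset : {ω | ∀ i : Fin N, ξ i.val ω = v i}
      = ⋂ m ∈ Finset.range N, ξ m ⁻¹' {extF v m} := by
    ext ω
    simp only [Set.mem_setOf_eq, Set.mem_iInter, Set.mem_preimage, Set.mem_singleton_iff,
      Finset.mem_range]
    constructor
    · intro h m hm
      rw [extF_lt v hm]
      exact h ⟨m, hm⟩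
    · intro h i
      have := h i.val i.isLt
      rw [extF_lt v i.isLt] at this
      exact this
  rw [hset]
  rw [hindep.measure_inter_preimage_eq_mul (Finset.range N)
    (sets := fun m => {extF v m}) (fun i _ => measurableSet_singleton _)]
  have : ∀ m ∈ Finset.range N, P (ξ m ⁻¹' {extF v m}) = pdist P ξ (extF v m) := by
    intro m _
    exact (hident m).measure_mem_eq (measurableSet_singleton _)
  rw [Finset.prod_congr rfl this]
  rw [← Fin.prod_univ_eq_prod_range (fun m => pdist P ξ (extF v m)) N]
  exact Finset.prod_congr rfl fun i _ => by rw [extF_lt v i.isLt]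

lemma meas_eq_tsum (hmeas : ∀ i, Measurable (ξ i))
    (hindep : iIndepFun ξ P)
    (hident : ∀ i, IdentDistrib (ξ i) (ξ 0) P P)
    (N : ℕ) (Q : (Fin N → XX) → Prop) :
    P {ω | Q (fun i : Fin N => ξ i.val ω)}
      = ∑' v : Fin N → XX, if Q v then wgt (pdist P ξ) v else 0 := by
  set C : (Fin N → XX) → Set Ω := fun v =>
    if Q v then {ω | ∀ i : Fin N, ξ i.val ω = v i} else ∅ with hC
  have hdecomp : {ω | Q (fun i : Fin N => ξ i.val ω)} = ⋃ v : Fin N → XX, C v := by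
    ext ω
    simp only [Set.mem_setOf_eq, Set.mem_iUnion, hC]
    constructor
    · intro h
      refine ⟨fun i => ξ i.val ω, ?_⟩
      rw [if_pos h]
      exact fun i => rfl
    · rintro ⟨v, hv⟩
      by_cases hQ : Q v
      · rw [if_pos hQ] at hv
        have : (fun i : Fin N => ξ i.val ω) = v := funext hv
        rw [this]
        exact hQ
      · rw [if_neg hQ] at hv
        exact absurd hv (Set.notMem_empty ω)
  have hmeasC : ∀ v, MeasurableSet (C v) := by
    intro v
    simp only [hC]
    by_cases hQ : Q v
    · rw [if_pos hQ]
      have : {ω | ∀ i : Fin N, ξ i.val ω = v i} = ⋂ i : Fin N, ξ i.val ⁻¹' {v i} := by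
        ext ω; simp [Set.mem_iInter]
      rw [this]
      exact MeasurableSet.iInter fun i => (hmeas i.val) (measurableSet_singleton _)
    · rw [if_neg hQ]
      exact MeasurableSet.empty
  have hdisj : Pairwise (Function.onFun Disjoint C) := by
    intro v v' hvv'
    apply Set.disjoint_left.mpr
    intro ω hv hv'
    simp only [hC] at hv hv'
    by_cases hQ : Q v
    · by_cases hQ' : Q v'
      · rw [if_pos hQ] at hv
        rw [if_pos hQ'] at hv'
        apply hvv'
        funext i
        rw [← hv i, ← hv' i]
      · rw [if_neg hQ'] at hv'
        exact absurd hv' (Set.notMem_empty ω)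
    · rw [if_neg hQ] at hv
      exact absurd hv (Set.notMem_empty ω)
  rw [hdecomp, measure_iUnion hdisj hmeasC]
  apply tsum_congr
  intro v
  simp only [hC]
  by_cases hQ : Q v
  · rw [if_pos hQ, if_pos hQ]
    exact meas_cylinder P ξ hmeas hindep hident N v
  · rw [if_neg hQ, if_neg hQ]
    exact measure_empty

end

end AllelicAux

namespace AllelicAux

noncomputable section
open scoped ENNReal Classical
open MeasureTheory ProbabilityTheory

lemma tsum_if_subtype {α : Type*} (Q : α → Prop) (f : α → ℝ≥0∞) :
    (∑' v : α, if Q v then f v else 0) = ∑' v : {v // Q v}, f v.1 := by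
  have h : ∀ v, (if Q v then f v else 0) = Set.indicator {v | Q v} f v := by
    intro v
    by_cases h : Q v
    · rw [if_pos h]; exact (Set.indicator_of_mem h f).symm
    · rw [if_neg h]; exact (Set.indicator_of_notMem h f).symm
  rw [tsum_congr h, ← _root_.tsum_subtype]
  rfl

lemma ABpred_iff (g : ℕ → XX) (nn ll : ℕ → ℕ) (k : ℕ) :
    ABpred nn ll k (fun i : Fin (NN nn k) => g i.val)
      ↔ ∀ i < k, BlockOK (nn i) (ll i) (fun j => g (NN nn i + j)) := by
  unfold ABpred
  apply forall₂_congr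
  intro i hi
  apply BlockOK_congr
  intro j hj
  have hlt : NN nn i + j < NN nn k := by
    have h3 : NN nn i + nn i = NN nn (i+1) := rfl
    have h4 : NN nn (i+1) ≤ NN nn k := NN_mono nn hi
    omega
  rw [extF_lt _ hlt]

lemma Dpred_iff (g : ℕ → XX) (n ℓ : ℕ) :
    Dpred n ℓ (fun i : Fin n => g i.val)
      ↔ ((∑ j ∈ Finset.range n, (g j).1) = n - 1
          ∧ (∑ j ∈ Finset.range n, (g j).2) = ℓ) := by
  unfold Dpred
  rw [Fin.sum_univ_eq_sum_range (fun j => (g j).1) n,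
    Fin.sum_univ_eq_sum_range (fun j => (g j).2) n]

end

end AllelicAux

set_option maxHeartbeats 1000000 in
/-- Law of the allelic tree with cluster sizes: for cluster sizes `nn 0, ..., nn (k-1) ≥ 1`
and mutant counts `ll 0, ..., ll (k-1)` with `ll 0 + ... + ll (j-1) > j - 1` for `1 ≤ j < k`
(so that the first `k` clusters all belong to the tree of a single ancestor),
`P(|C_1| = nn 0, M_1 = ll 0, ..., |C_k| = nn (k-1), M_k = ll (k-1))
  = Π_i (1 / nn i) π^{* nn i}_{nn i - 1, ll i}`. -/
theorem law_of_allelic_clusters_and_mutants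
    {Ω : Type*} [MeasureSpace Ω] (P : Measure Ω := volume) [IsProbabilityMeasure P]
    (ξ : ℕ → Ω → ℕ × ℕ) (hmeas : ∀ i, Measurable (ξ i))
    (hindep : iIndepFun ξ P)
    (hident : ∀ i, IdentDistrib (ξ i) (ξ 0) P P)
    (hint : Integrable (fun ω => (((ξ 0 ω).1 : ℝ) + ((ξ 0 ω).2 : ℝ))) P)
    (hmean : (∫ ω, (((ξ 0 ω).1 : ℝ) + ((ξ 0 ω).2 : ℝ)) ∂P) ≤ 1)
    (Tc : ℕ → Ω → ℕ)
    (hTc : ∀ j ω, Tc j ω = sInf {m : ℕ |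
      (∑ i ∈ Finset.range m, ((ξ i ω).1 : ℤ)) - m = -(j : ℤ)})
    (k : ℕ) (hk : 1 ≤ k) (nn ll : ℕ → ℕ)
    (hnn : ∀ i < k, 1 ≤ nn i)
    (hll : ∀ j, 1 ≤ j → j < k → (j : ℤ) - 1 < ∑ i ∈ Finset.range j, (ll i : ℤ)) :
    P {ω | ∀ i < k, Tc (i + 1) ω - Tc i ω = nn i ∧
        (∑ ℓ ∈ Finset.Ico (Tc i ω) (Tc (i + 1) ω), (ξ ℓ ω).2) = ll i}
      = ∏ i ∈ Finset.range k, ((nn i : ENNReal)⁻¹ *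
          P {ω | (∑ j ∈ Finset.range (nn i), (ξ j ω).1) = nn i - 1
               ∧ (∑ j ∈ Finset.range (nn i), (ξ j ω).2) = ll i}) := by
  classical
  set p : ℕ × ℕ → ENNReal := AllelicAux.pdist P ξ with hp
  -- rewrite the LHS event through the block decomposition
  have hevent : {ω | ∀ i < k, Tc (i + 1) ω - Tc i ω = nn i ∧
        (∑ ℓ ∈ Finset.Ico (Tc i ω) (Tc (i + 1) ω), (ξ ℓ ω).2) = ll i}
      = {ω | AllelicAux.ABpred nn ll k
          (fun i : Fin (AllelicAux.NN nn k) => ξ i.val ω)} := by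
    ext ω
    simp only [Set.mem_setOf_eq]
    rw [AllelicAux.key_equiv (fun m => ξ m ω) (fun j => Tc j ω) (fun j => hTc j ω) k nn ll hnn]
    exact (AllelicAux.ABpred_iff (fun m => ξ m ω) nn ll k).symm
  have hfactor : ∀ i < k,
      (∑' u : Fin (nn i) → (ℕ × ℕ),
          if AllelicAux.BlockOK (nn i) (ll i) (AllelicAux.extF u)
            then AllelicAux.wgt p u else 0)
      = (nn i : ENNReal)⁻¹ *
          P {ω | (∑ j ∈ Finset.range (nn i), (ξ j ω).1) = nn i - 1
               ∧ (∑ j ∈ Finset.range (nn i), (ξ j ω).2) = ll i} := by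
    intro i hi
    have hni : 0 < nn i := hnn i hi
    have hDev : P {ω | (∑ j ∈ Finset.range (nn i), (ξ j ω).1) = nn i - 1
            ∧ (∑ j ∈ Finset.range (nn i), (ξ j ω).2) = ll i}
        = ∑' u : Fin (nn i) → (ℕ × ℕ),
            if AllelicAux.Dpred (nn i) (ll i) u then AllelicAux.wgt p u else 0 := by
      rw [← AllelicAux.meas_eq_tsum P ξ hmeas hindep hident (nn i)
        (AllelicAux.Dpred (nn i) (ll i))]
      congr 1
      ext ω
      simp only [Set.mem_setOf_eq]
      exact (AllelicAux.Dpred_iff (fun m => ξ m ω) (nn i) (ll i)).symm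
    have hBF : ∀ u : Fin (nn i) → (ℕ × ℕ),
        (if AllelicAux.BlockOK (nn i) (ll i) (AllelicAux.extF u)
          then AllelicAux.wgt p u else 0)
        = (if AllelicAux.FPpred (nn i) (ll i) u then AllelicAux.wgt p u else 0) := by
      intro u
      rw [if_congr (AllelicAux.FPpred_iff_BlockOK u).symm rfl rfl]
    have hcyc := AllelicAux.cycle_tsum p hni (ll i)
    have hne0 : ((nn i : ENNReal)) ≠ 0 := Nat.cast_ne_zero.mpr (by omega)
    have hnetop : ((nn i : ENNReal)) ≠ ⊤ := ENNReal.natCast_ne_top _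
    calc (∑' u : Fin (nn i) → (ℕ × ℕ),
          if AllelicAux.BlockOK (nn i) (ll i) (AllelicAux.extF u)
            then AllelicAux.wgt p u else 0)
        = ∑' u : {u : Fin (nn i) → (ℕ × ℕ) // AllelicAux.FPpred (nn i) (ll i) u},
            AllelicAux.wgt p u.1 := by
          rw [tsum_congr hBF, AllelicAux.tsum_if_subtype]
      _ = (nn i : ENNReal)⁻¹ * ((nn i : ENNReal) *
            ∑' u : {u : Fin (nn i) → (ℕ × ℕ) // AllelicAux.FPpred (nn i) (ll i) u},
              AllelicAux.wgt p u.1) := by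
          rw [← mul_assoc, ENNReal.inv_mul_cancel hne0 hnetop, one_mul]
      _ = (nn i : ENNReal)⁻¹ *
            ∑' u : {u : Fin (nn i) → (ℕ × ℕ) // AllelicAux.Dpred (nn i) (ll i) u},
              AllelicAux.wgt p u.1 := by
          rw [← hcyc]
      _ = (nn i : ENNReal)⁻¹ * ∑' u : Fin (nn i) → (ℕ × ℕ),
            (if AllelicAux.Dpred (nn i) (ll i) u then AllelicAux.wgt p u else 0) := by
          rw [AllelicAux.tsum_if_subtype]
      _ = _ := by rw [← hDev]
  calc P {ω | ∀ i < k, Tc (i + 1) ω - Tc i ω = nn i ∧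
        (∑ ℓ ∈ Finset.Ico (Tc i ω) (Tc (i + 1) ω), (ξ ℓ ω).2) = ll i}
      = P {ω | AllelicAux.ABpred nn ll k
          (fun i : Fin (AllelicAux.NN nn k) => ξ i.val ω)} := by rw [hevent]
    _ = ∑' v : Fin (AllelicAux.NN nn k) → (ℕ × ℕ),
          if AllelicAux.ABpred nn ll k v then AllelicAux.wgt p v else 0 :=
        AllelicAux.meas_eq_tsum P ξ hmeas hindep hident _ _
    _ = ∏ i ∈ Finset.range k, ∑' u : Fin (nn i) → (ℕ × ℕ),
          if AllelicAux.BlockOK (nn i) (ll i) (AllelicAux.extF u)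
            then AllelicAux.wgt p u else 0 :=
        AllelicAux.fact_tsum p nn ll k
    _ = _ := Finset.prod_congr rfl fun i hi => hfactor i (Finset.mem_range.mp hi)
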